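/- Let V be a seminormed vector space over a complete nonarchimedean valued field k with nontrivial rank-1 valuation, and let V̂ denote its completion. For any k(1)-submodule W ⊆ V with W^{ac} = V(1), the closure Ŵ of the image of W in V̂ satisfies Ŵ^{ac} = V̂(1), and the canonical map from the inverse limit lim_{0<r<1} W/k(r)W to Ŵ is an isomorphism of topological k(1)-modules. -/

import Mathlib

open Pointwise UniformSpace

/-!
STATEMENT 3: Let `V` be a seminormed vector space over a complete nonarchimedean
nontrivially valued field `k`, `V̂` its completion, and `W ⊆ V` a `k(1)`-submodule with
`W^{ac} = V(1)`.  Then the closure `Ŵ` of the image of `W` in `V̂` satisfies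
`Ŵ^{ac} = V̂(1)`, and the canonical map `lim_{0<r<1} W/k(r)W → Ŵ` is an isomorphism of
topological `k(1)`-modules (stated as: an additive homeomorphism from the inverse limit of
the discrete quotients `W/k(r)W` onto `Ŵ` compatible with the canonical maps from `W`).
-/

def kball (k : Type*) [NormedField k] (r : ℝ) : Set k := {c | ‖c‖ ≤ r}

/-- The additive subgroup `k(r)W` generated by products `c • w`, `|c| ≤ r`, `w ∈ W`. -/
def krW (k : Type*) [NormedField k] {V : Type*} [SeminormedAddCommGroup V]
    [NormedSpace k V] (W : AddSubgroup V) (r : ℝ) : AddSubgroup V :=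
  AddSubgroup.closure (kball k r • (W : Set V))

lemma krW_mono (k : Type*) [NormedField k] {V : Type*} [SeminormedAddCommGroup V]
    [NormedSpace k V] (W : AddSubgroup V) {r r' : ℝ} (h : r' ≤ r) :
    krW k W r' ≤ krW k W r := by
  apply AddSubgroup.closure_mono
  rintro x ⟨c, hc, v, hv, rfl⟩
  exact ⟨c, le_trans hc h, v, hv, rfl⟩

/-- The quotient `W/k(r)W`. -/
def QW (k : Type*) [NormedField k] {V : Type*} [SeminormedAddCommGroup V]
    [NormedSpace k V] (W : AddSubgroup V) (r : ℝ) : Type _ :=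
  W ⧸ ((krW k W r).addSubgroupOf W)

instance (k : Type*) [NormedField k] {V : Type*} [SeminormedAddCommGroup V]
    [NormedSpace k V] (W : AddSubgroup V) (r : ℝ) : AddCommGroup (QW k W r) := by
  unfold QW; infer_instance

/-- Transition maps `W/k(r')W → W/k(r)W` for `r' ≤ r`. -/
def QWmap (k : Type*) [NormedField k] {V : Type*} [SeminormedAddCommGroup V]
    [NormedSpace k V] (W : AddSubgroup V) {r r' : ℝ} (h : r' ≤ r) :
    QW k W r' →+ QW k W r :=
  QuotientAddGroup.map _ _ (AddMonoidHom.id W) (by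
    intro x hx
    exact krW_mono k W h hx)

/-- The inverse limit `lim_{0<r<1} W/k(r)W` as a subset of the product. -/
def QWlim (k : Type*) [NormedField k] {V : Type*} [SeminormedAddCommGroup V]
    [NormedSpace k V] (W : AddSubgroup V) : Set (Π r : Set.Ioo (0 : ℝ) 1, QW k W r.1) :=
  {f | ∀ (r r' : Set.Ioo (0 : ℝ) 1) (h : r'.1 ≤ r.1), QWmap k W h (f r') = f r}

set_option linter.unusedSectionVars false

section AuxProofs

open Filter Topology

variable {k V : Type*} [NontriviallyNormedField k]
  [IsUltrametricDist k] [SeminormedAddCommGroup V] [IsUltrametricDist V]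
  [NormedSpace k V] {W : AddSubgroup V}

lemma W_norm_le
    (hWac : (⋂ r ∈ Set.Ioi (1 : ℝ), kball k r • (W : Set V)) = {v : V | ‖v‖ ≤ 1})
    {w : V} (hw : w ∈ W) : ‖w‖ ≤ 1 := by
  have h : w ∈ ⋂ r ∈ Set.Ioi (1:ℝ), kball k r • (W : Set V) := by
    refine Set.mem_iInter₂.2 fun r hr => ?_
    exact Set.mem_smul.2 ⟨1, by simpa [kball] using le_of_lt hr, w, hw, one_smul _ _⟩
  rw [hWac] at h; exact h

lemma mem_W_of_norm_lt
    (hWsmul : ∀ c ∈ kball k 1, ∀ v ∈ W, c • v ∈ W)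
    (hWac : (⋂ r ∈ Set.Ioi (1 : ℝ), kball k r • (W : Set V)) = {v : V | ‖v‖ ≤ 1})
    {v : V} (hv : ‖v‖ < 1) : v ∈ W := by
  by_cases h : ∃ c : k, 1 < ‖c‖ ∧ ‖c‖ * ‖v‖ ≤ 1
  · obtain ⟨c₀, hc₀, hc₀v⟩ := h
    have hc₀0 : c₀ ≠ 0 := by
      intro h0; rw [h0, norm_zero] at hc₀; linarith
    have h1 : c₀ • v ∈ {v : V | ‖v‖ ≤ 1} := by
      simp only [Set.mem_setOf_eq, norm_smul]; exact hc₀v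
    rw [← hWac] at h1
    have h2 := Set.mem_smul.1 (Set.mem_iInter₂.1 h1 ‖c₀‖ hc₀)
    obtain ⟨c, hc, w, hw, hcw⟩ := h2
    have hv' : v = (c₀⁻¹ * c) • w := by
      rw [mul_smul, hcw, inv_smul_smul₀ hc₀0]
    rw [hv']
    refine hWsmul _ ?_ _ hw
    have hcle : ‖c‖ ≤ ‖c₀‖ := hc
    simp only [kball, Set.mem_setOf_eq, norm_mul, norm_inv]
    rw [inv_mul_le_iff₀ (by linarith), mul_one]
    exact hcle
  · push_neg at h
    have hv0 : 0 < ‖v‖ := by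
      rcases NormedField.exists_one_lt_norm k with ⟨c₀, hc₀⟩
      rcases (norm_nonneg v).lt_or_eq with h' | h'
      · exact h'
      · exfalso; have := h c₀ hc₀; rw [← h', mul_zero] at this; linarith
    have h1 : v ∈ {v : V | ‖v‖ ≤ 1} := le_of_lt hv
    rw [← hWac] at h1
    have hr : (1:ℝ) < 1 / ‖v‖ := by rw [lt_div_iff₀ hv0]; linarith
    obtain ⟨c, hc, w, hw, hcw⟩ := Set.mem_smul.1 (Set.mem_iInter₂.1 h1 _ hr)
    have hc' : ‖c‖ ≤ 1 / ‖v‖ := hc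
    have hc1 : ‖c‖ ≤ 1 := by
      by_contra hc1
      push_neg at hc1
      have h2 := h c hc1
      have h3 : ‖c‖ * ‖v‖ ≤ (1/‖v‖) * ‖v‖ := by gcongr
      rw [one_div_mul_cancel (ne_of_gt hv0)] at h3
      linarith
    rw [← hcw]; exact hWsmul c hc1 w hw

lemma norm_le_of_mem_krW
    (hWac : (⋂ r ∈ Set.Ioi (1 : ℝ), kball k r • (W : Set V)) = {v : V | ‖v‖ ≤ 1})
    {r : ℝ} (hr : 0 ≤ r) {x : V} (hx : x ∈ krW k W r) : ‖x‖ ≤ r := by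
  induction hx using AddSubgroup.closure_induction with
  | mem y hy =>
    obtain ⟨c, hc, w, hw, rfl⟩ := Set.mem_smul.1 hy
    rw [norm_smul]
    calc ‖c‖ * ‖w‖ ≤ ‖c‖ * 1 := by gcongr; exact W_norm_le hWac hw
    _ = ‖c‖ := mul_one _
    _ ≤ r := hc
  | zero => simpa using hr
  | add x y _ _ hx hy =>
    exact le_trans (IsUltrametricDist.norm_add_le_max x y) (max_le hx hy)
  | neg x _ hx => simpa using hx

lemma mem_krW_of_norm_lt
    (hWsmul : ∀ c ∈ kball k 1, ∀ v ∈ W, c • v ∈ W)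
    (hWac : (⋂ r ∈ Set.Ioi (1 : ℝ), kball k r • (W : Set V)) = {v : V | ‖v‖ ≤ 1})
    {r : ℝ} {c : k} (hc0 : c ≠ 0) (hcr : ‖c‖ ≤ r)
    {x : V} (hx : ‖x‖ < ‖c‖) : x ∈ krW k W r := by
  have h1 : c⁻¹ • x ∈ W := by
    apply mem_W_of_norm_lt hWsmul hWac
    rw [norm_smul, norm_inv]
    rw [inv_mul_lt_one₀ (norm_pos_iff.2 hc0)]
    exact hx
  exact AddSubgroup.subset_closure
    (Set.mem_smul.2 ⟨c, hcr, c⁻¹ • x, h1, smul_inv_smul₀ hc0 x⟩)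


-- ultrametric inequality in the completion
lemma compl_norm_add_le_max (x y : Completion V) : ‖x + y‖ ≤ max ‖x‖ ‖y‖ := by
  refine Completion.induction_on₂ x y ?_ ?_
  · apply isClosed_le
    · exact (continuous_fst.add continuous_snd).norm
    · exact continuous_fst.norm.max continuous_snd.norm
  · intro a b
    rw [← Completion.coe_add, Completion.norm_coe, Completion.norm_coe, Completion.norm_coe]
    exact IsUltrametricDist.norm_add_le_max a b

lemma compl_norm_sub_le_max (x y z : Completion V) : ‖x - z‖ ≤ max ‖x - y‖ ‖y - z‖ := by
  have := compl_norm_add_le_max (x - y) (y - z)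
  rwa [sub_add_sub_cancel] at this

lemma compl_norm_sub_le_max₃ (x y z u : Completion V) :
    ‖x - u‖ ≤ max ‖x - y‖ (max ‖y - z‖ ‖z - u‖) :=
  le_trans (compl_norm_sub_le_max x y u)
    (max_le_max le_rfl (compl_norm_sub_le_max y z u))

noncomputable def QWrep {r : ℝ} (q : QW k W r) : W :=
  Quotient.out (show W ⧸ ((krW k W r).addSubgroupOf W) from q)

lemma QWrep_spec {r : ℝ} (q : QW k W r) :
    (QuotientAddGroup.mk (QWrep q) : QW k W r) = q :=
  QuotientAddGroup.out_eq' _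

lemma QW_eq_iff {r : ℝ} (w w' : W) :
    (QuotientAddGroup.mk w : QW k W r) = QuotientAddGroup.mk w' ↔
      (w' : V) - (w : V) ∈ krW k W r := by
  rw [show ((QuotientAddGroup.mk w : QW k W r) = QuotientAddGroup.mk w' ↔
      -w + w' ∈ (krW k W r).addSubgroupOf W) from QuotientAddGroup.eq,
    AddSubgroup.mem_addSubgroupOf]
  simp [sub_eq_neg_add]

lemma QWmap_mk {r r' : ℝ} (h : r' ≤ r) (w : W) :
    QWmap k W h (QuotientAddGroup.mk w) = (QuotientAddGroup.mk w : QW k W r) := by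
  unfold QWmap
  exact QuotientAddGroup.map_mk _ _ _ _ _

lemma reps_close
    (hWac : (⋂ r ∈ Set.Ioi (1 : ℝ), kball k r • (W : Set V)) = {v : V | ‖v‖ ≤ 1})
    {f : Π r : Set.Ioo (0 : ℝ) 1, QW k W r.1} (hf : f ∈ QWlim k W)
    (r r' : Set.Ioo (0:ℝ) 1) (h : r'.1 ≤ r.1) (w w' : W)
    (hw : QuotientAddGroup.mk w = f r) (hw' : QuotientAddGroup.mk w' = f r') :
    ‖(w' : V) - (w : V)‖ ≤ r.1 := by
  have h1 : (QuotientAddGroup.mk w' : QW k W r.1) = f r := by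
    rw [← hf r r' h, ← hw', QWmap_mk]
  have h2 : (QuotientAddGroup.mk w : QW k W r.1) = QuotientAddGroup.mk w' := by
    rw [hw, h1]
  rw [QW_eq_iff] at h2
  exact norm_le_of_mem_krW hWac (le_of_lt r.2.1) h2


-- scale sequence
lemma rr_mem (n : ℕ) : ((1:ℝ)/2)^(n+1) ∈ Set.Ioo (0:ℝ) 1 :=
  ⟨by positivity, pow_lt_one₀ (by norm_num) (by norm_num) (Nat.succ_ne_zero n)⟩

noncomputable def rr (n : ℕ) : Set.Ioo (0:ℝ) 1 := ⟨((1:ℝ)/2)^(n+1), rr_mem n⟩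

lemma rr_anti {m n : ℕ} (h : m ≤ n) : (rr n).1 ≤ (rr m).1 :=
  pow_le_pow_of_le_one (by norm_num) (by norm_num) (by omega)

lemma rr_small {ε : ℝ} (hε : 0 < ε) : ∃ N, (rr N).1 < ε := by
  obtain ⟨N, hN⟩ := exists_pow_lt_of_lt_one hε (by norm_num : (1:ℝ)/2 < 1)
  refine ⟨N, ?_⟩
  calc (rr N).1 = ((1:ℝ)/2)^(N+1) := rfl
  _ ≤ ((1:ℝ)/2)^N := pow_le_pow_of_le_one (by norm_num) (by norm_num) (Nat.le_succ N)
  _ < ε := hN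

noncomputable def csq (f : ↥(QWlim k W)) (n : ℕ) : Completion V :=
  ((QWrep (f.1 (rr n)) : V) : Completion V)

lemma csq_cauchy
    (hWac : (⋂ r ∈ Set.Ioi (1 : ℝ), kball k r • (W : Set V)) = {v : V | ‖v‖ ≤ 1})
    (f : ↥(QWlim k W)) : CauchySeq (csq f) := by
  rw [Metric.cauchySeq_iff']
  intro ε hε
  obtain ⟨N, hN⟩ := rr_small hε
  refine ⟨N, fun n hn => ?_⟩
  rw [dist_eq_norm]
  show ‖((QWrep (f.1 (rr n)) : V) : Completion V) - ((QWrep (f.1 (rr N)) : V) : Completion V)‖ < ε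
  rw [← Completion.coe_sub, Completion.norm_coe]
  have h1 := reps_close hWac f.2 (rr N) (rr n) (rr_anti hn)
    (QWrep (f.1 (rr N))) (QWrep (f.1 (rr n))) (QWrep_spec _) (QWrep_spec _)
  exact lt_of_le_of_lt h1 hN

noncomputable def Phi (f : ↥(QWlim k W)) : Completion V :=
  limUnder Filter.atTop (csq f)

lemma Phi_tendsto
    (hWac : (⋂ r ∈ Set.Ioi (1 : ℝ), kball k r • (W : Set V)) = {v : V | ‖v‖ ≤ 1})
    (f : ↥(QWlim k W)) :
    Filter.Tendsto (csq f) Filter.atTop (nhds (Phi f)) :=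
  (csq_cauchy hWac f).tendsto_limUnder


lemma Phi_close
    (hWac : (⋂ r ∈ Set.Ioi (1 : ℝ), kball k r • (W : Set V)) = {v : V | ‖v‖ ≤ 1})
    (f : ↥(QWlim k W)) (r : Set.Ioo (0:ℝ) 1) (w : W)
    (hw : QuotientAddGroup.mk w = f.1 r) :
    ‖Phi f - ((w : V) : Completion V)‖ ≤ r.1 := by
  have h1 : Filter.Tendsto (fun n => ‖csq f n - ((w : V) : Completion V)‖)
      Filter.atTop (nhds ‖Phi f - ((w : V) : Completion V)‖) :=
    ((Phi_tendsto hWac f).sub tendsto_const_nhds).norm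
  refine le_of_tendsto h1 ?_
  obtain ⟨N, hN⟩ := rr_small r.2.1
  filter_upwards [Filter.eventually_ge_atTop N] with n hn
  show ‖((QWrep (f.1 (rr n)) : V) : Completion V) - ((w : V) : Completion V)‖ ≤ r.1
  rw [← Completion.coe_sub, Completion.norm_coe]
  exact reps_close hWac f.2 r (rr n)
    (le_trans (le_trans (rr_anti hn) (le_of_lt hN)) le_rfl) w _ hw (QWrep_spec _)

lemma Phi_mem (hWac : (⋂ r ∈ Set.Ioi (1 : ℝ), kball k r • (W : Set V)) = {v : V | ‖v‖ ≤ 1})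
    (f : ↥(QWlim k W)) :
    Phi f ∈ closure ((fun v : V => (v : Completion V)) '' (W : Set V)) := by
  refine mem_closure_of_tendsto (Phi_tendsto hWac f) ?_
  filter_upwards with n
  exact ⟨(QWrep (f.1 (rr n)) : V), (QWrep (f.1 (rr n))).2, rfl⟩

lemma Phi_agree
    (hWsmul : ∀ c ∈ kball k 1, ∀ v ∈ W, c • v ∈ W)
    (hWac : (⋂ r ∈ Set.Ioi (1 : ℝ), kball k r • (W : Set V)) = {v : V | ‖v‖ ≤ 1})
    (f g : ↥(QWlim k W)) (r : Set.Ioo (0:ℝ) 1) (c : k)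
    (hc0 : c ≠ 0) (hcr : ‖c‖ ≤ r.1) (hfg : ‖Phi f - Phi g‖ < ‖c‖) :
    f.1 r = g.1 r := by
  have hcpos : 0 < ‖c‖ := norm_pos_iff.2 hc0
  have hr1 : r.1 < 1 := r.2.2
  set r' : Set.Ioo (0:ℝ) 1 := ⟨min r.1 (‖c‖/2),
    ⟨lt_min r.2.1 (by positivity), lt_of_le_of_lt (min_le_left _ _) hr1⟩⟩ with hr'def
  have hr' : r'.1 ≤ r.1 := min_le_left _ _
  have hr'c : r'.1 < ‖c‖ := lt_of_le_of_lt (min_le_right _ _) (by linarith)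
  set w1 := QWrep (f.1 r') with hw1
  set w2 := QWrep (g.1 r') with hw2
  have hb : ‖(w1 : V) - (w2 : V)‖ < ‖c‖ := by
    rw [← Completion.norm_coe, Completion.coe_sub]
    refine lt_of_le_of_lt
      (compl_norm_sub_le_max₃ ((w1:V) : Completion V) (Phi f) (Phi g) ((w2:V) : Completion V)) ?_
    refine max_lt ?_ (max_lt hfg ?_)
    · rw [norm_sub_rev]
      exact lt_of_le_of_lt (Phi_close hWac f r' w1 (QWrep_spec _)) hr'c
    · exact lt_of_le_of_lt (Phi_close hWac g r' w2 (QWrep_spec _)) hr'c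
  have hmem : (w1 : V) - (w2 : V) ∈ krW k W r.1 :=
    mem_krW_of_norm_lt hWsmul hWac hc0 hcr hb
  have heq : (QuotientAddGroup.mk w2 : QW k W r.1) = QuotientAddGroup.mk w1 :=
    (QW_eq_iff w2 w1).2 hmem
  have hf' : f.1 r = QuotientAddGroup.mk w1 := by
    rw [← f.2 r r' hr', ← QWrep_spec (f.1 r'), QWmap_mk]
  have hg' : g.1 r = QuotientAddGroup.mk w2 := by
    rw [← g.2 r r' hr', ← QWrep_spec (g.1 r'), QWmap_mk]
  rw [hf', hg', heq]

lemma norm_eq_zero_of_forall {x : Completion V}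
    (h : ∀ r : Set.Ioo (0:ℝ) 1, ‖x‖ ≤ r.1) : x = 0 := by
  rw [← norm_le_zero_iff]
  by_contra hc
  push_neg at hc
  have h2 := h ⟨min (‖x‖/2) (1/2), ⟨lt_min (by linarith) (by norm_num),
    lt_of_le_of_lt (min_le_right _ _) (by norm_num)⟩⟩
  simp only at h2
  have : min (‖x‖/2) (1/2) ≤ ‖x‖/2 := min_le_left _ _
  linarith


lemma rr_tendsto : Filter.Tendsto (fun n => (rr n).1) Filter.atTop (nhds 0) := by
  have h : Filter.Tendsto (fun n : ℕ => ((1:ℝ)/2)^n) Filter.atTop (nhds 0) :=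
    tendsto_pow_atTop_nhds_zero_of_lt_one (by norm_num) (by norm_num)
  have := h.comp (Filter.tendsto_add_atTop_nat 1)
  simpa [rr, Function.comp_def] using this

lemma Phi_add
    (hWsmul : ∀ c ∈ kball k 1, ∀ v ∈ W, c • v ∈ W)
    (hWac : (⋂ r ∈ Set.Ioi (1 : ℝ), kball k r • (W : Set V)) = {v : V | ‖v‖ ≤ 1})
    (f g h : ↥(QWlim k W)) (hsum : f.1 + g.1 = h.1) :
    Phi h = Phi f + Phi g := by
  refine tendsto_nhds_unique (Phi_tendsto hWac h) ?_
  have h1 : Filter.Tendsto (fun n => csq f n + csq g n) Filter.atTop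
      (nhds (Phi f + Phi g)) := (Phi_tendsto hWac f).add (Phi_tendsto hWac g)
  refine h1.congr_dist ?_
  have hb : ∀ n, dist (csq f n + csq g n) (csq h n) ≤ (rr n).1 := by
    intro n
    have he : (QuotientAddGroup.mk (QWrep (f.1 (rr n)) + QWrep (g.1 (rr n))) :
        QW k W (rr n).1) = QuotientAddGroup.mk (QWrep (h.1 (rr n))) := by
      have h2 : (QuotientAddGroup.mk (QWrep (f.1 (rr n)) + QWrep (g.1 (rr n))) :
          QW k W (rr n).1) = QuotientAddGroup.mk (QWrep (f.1 (rr n)))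
            + QuotientAddGroup.mk (QWrep (g.1 (rr n))) := rfl
      rw [h2, QWrep_spec, QWrep_spec, QWrep_spec]
      exact congrFun hsum (rr n)
    rw [QW_eq_iff] at he
    have hn := norm_le_of_mem_krW hWac (le_of_lt (rr n).2.1) he
    rw [dist_eq_norm]
    show ‖(((QWrep (f.1 (rr n)) : V) : Completion V) + ((QWrep (g.1 (rr n)) : V) : Completion V))
      - ((QWrep (h.1 (rr n)) : V) : Completion V)‖ ≤ (rr n).1
    rw [← Completion.coe_add, ← Completion.coe_sub, Completion.norm_coe]
    calc ‖((QWrep (f.1 (rr n)) : V) + (QWrep (g.1 (rr n)) : V)) - (QWrep (h.1 (rr n)) : V)‖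
        = ‖(QWrep (h.1 (rr n)) : V) - ((QWrep (f.1 (rr n)) : V) + (QWrep (g.1 (rr n)) : V))‖ :=
          norm_sub_rev _ _
      _ ≤ (rr n).1 := by simpa using hn
  refine squeeze_zero (fun n => dist_nonneg) hb rr_tendsto

lemma Phi_const
    (hWac : (⋂ r ∈ Set.Ioi (1 : ℝ), kball k r • (W : Set V)) = {v : V | ‖v‖ ≤ 1})
    (f : ↥(QWlim k W)) (w : W) (hw : ∀ r : Set.Ioo (0:ℝ) 1, f.1 r = QuotientAddGroup.mk w) :
    Phi f = ((w : V) : Completion V) := by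
  have h : ∀ r : Set.Ioo (0:ℝ) 1, ‖Phi f - ((w : V) : Completion V)‖ ≤ r.1 :=
    fun r => Phi_close hWac f r w (hw r).symm
  have := norm_eq_zero_of_forall h
  rwa [sub_eq_zero] at this


lemma closureW_norm_le
    (hWac : (⋂ r ∈ Set.Ioi (1 : ℝ), kball k r • (W : Set V)) = {v : V | ‖v‖ ≤ 1})
    {x : Completion V}
    (hx : x ∈ closure ((fun v : V => (v : Completion V)) '' (W : Set V))) : ‖x‖ ≤ 1 := by
  have h : closure ((fun v : V => (v : Completion V)) '' (W : Set V)) ⊆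
      {x : Completion V | ‖x‖ ≤ 1} := by
    refine closure_minimal ?_ (isClosed_le continuous_norm continuous_const)
    rintro _ ⟨w, hw, rfl⟩
    simp only [Set.mem_setOf_eq, Completion.norm_coe]
    exact W_norm_le hWac hw
  exact h hx

lemma mem_closureW
    (hWsmul : ∀ c ∈ kball k 1, ∀ v ∈ W, c • v ∈ W)
    (hWac : (⋂ r ∈ Set.Ioi (1 : ℝ), kball k r • (W : Set V)) = {v : V | ‖v‖ ≤ 1})
    {x : Completion V} (hx : ‖x‖ < 1) :
    x ∈ closure ((fun v : V => (v : Completion V)) '' (W : Set V)) := by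
  rw [Metric.mem_closure_iff]
  intro ε hε
  obtain ⟨u, hu⟩ := Completion.denseRange_coe (α := V) |>.exists_dist_lt x
    (lt_min hε one_pos)
  have hdu : dist x ((u : V) : Completion V) < min ε 1 := hu
  have hnu : ‖u‖ < 1 := by
    rw [← Completion.norm_coe]
    have h1 : ((u : V) : Completion V) = x + (((u:V) : Completion V) - x) := by abel
    rw [h1]
    refine lt_of_le_of_lt (compl_norm_add_le_max _ _) (max_lt hx ?_)
    rw [← dist_eq_norm, dist_comm]
    exact lt_of_lt_of_le hdu (min_le_right _ _)
  exact ⟨((u : V) : Completion V), ⟨u, mem_W_of_norm_lt hWsmul hWac hnu, rfl⟩,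
    lt_of_lt_of_le hdu (min_le_left _ _)⟩

lemma mem_closureW'
    (hWsmul : ∀ c ∈ kball k 1, ∀ v ∈ W, c • v ∈ W)
    (hWac : (⋂ r ∈ Set.Ioi (1 : ℝ), kball k r • (W : Set V)) = {v : V | ‖v‖ ≤ 1})
    {r : ℝ} (hr : 1 < r) (hno : ∀ c : k, 1 < ‖c‖ → r < ‖c‖)
    {x : Completion V} (hx : ‖x‖ ≤ 1) :
    x ∈ closure ((fun v : V => (v : Completion V)) '' (W : Set V)) := by
  rw [Metric.mem_closure_iff]
  intro ε hε
  obtain ⟨u, hu⟩ := Completion.denseRange_coe (α := V) |>.exists_dist_lt x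
    (lt_min hε one_pos)
  have hdu : dist x ((u : V) : Completion V) < min ε 1 := hu
  have hnu : ‖u‖ ≤ 1 := by
    rw [← Completion.norm_coe]
    have h1 : ((u : V) : Completion V) = x + (((u:V) : Completion V) - x) := by abel
    rw [h1]
    refine le_trans (compl_norm_add_le_max _ _) (max_le hx ?_)
    rw [← dist_eq_norm, dist_comm]
    exact le_of_lt (lt_of_lt_of_le hdu (min_le_right _ _))
  have huW : u ∈ W := by
    have h1 : u ∈ {v : V | ‖v‖ ≤ 1} := hnu
    rw [← hWac] at h1
    obtain ⟨c, hc, w, hw, hcw⟩ := Set.mem_smul.1 (Set.mem_iInter₂.1 h1 r hr)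
    have hc' : ‖c‖ ≤ r := hc
    have hc1 : ‖c‖ ≤ 1 := by
      by_contra hc1
      push_neg at hc1
      exact absurd hc' (not_le.2 (hno c hc1))
    rw [← hcw]
    exact hWsmul c hc1 w hw
  exact ⟨((u : V) : Completion V), ⟨u, huW, rfl⟩, lt_of_lt_of_le hdu (min_le_left _ _)⟩

end AuxProofs

theorem stmt3 {k V : Type*} [NontriviallyNormedField k] [CompleteSpace k]
    [IsUltrametricDist k] [SeminormedAddCommGroup V] [IsUltrametricDist V]
    [NormedSpace k V] (W : AddSubgroup V)
    (hWsmul : ∀ c ∈ kball k 1, ∀ v ∈ W, c • v ∈ W)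
    (hWac : (⋂ r ∈ Set.Ioi (1 : ℝ), kball k r • (W : Set V)) = {v : V | ‖v‖ ≤ 1}) :
    -- `Ŵ^{ac} = V̂(1)`
    (⋂ r ∈ Set.Ioi (1 : ℝ),
        kball k r • closure ((fun v : V => (v : Completion V)) '' (W : Set V))) =
      {v : Completion V | ‖v‖ ≤ 1} ∧
    -- the canonical map `lim_{0<r<1} W/k(r)W → Ŵ` is an isomorphism of topological
    -- (additive) groups, each quotient `W/k(r)W` carrying the discrete topology
    (letI : ∀ r : Set.Ioo (0 : ℝ) 1, TopologicalSpace (QW k W r.1) := fun _ => ⊥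
     ∃ e : (QWlim k W) ≃ₜ
        (closure ((fun v : V => (v : Completion V)) '' (W : Set V))),
      (∀ f g h : QWlim k W, f.1 + g.1 = h.1 →
        (e h : Completion V) = e f + e g) ∧
      (∀ (w : W) (f : QWlim k W),
        (∀ r : Set.Ioo (0 : ℝ) 1, f.1 r = QuotientAddGroup.mk w) →
        (e f : Completion V) = ((w : V) : Completion V))) := by
  constructor
  · -- Part 1
    apply Set.eq_of_subset_of_subset
    · intro x hx
      show ‖x‖ ≤ 1
      by_contra hc
      push_neg at hc
      have h2 := Set.mem_iInter₂.1 hx ((1 + ‖x‖)/2) (by show (1:ℝ) < _; linarith)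
      obtain ⟨c, hcb, y, hy, hcy⟩ := Set.mem_smul.1 h2
      have hcb' : ‖c‖ ≤ (1 + ‖x‖)/2 := hcb
      have h3 : ‖x‖ ≤ (1+‖x‖)/2 := by
        calc ‖x‖ = ‖c‖ * ‖y‖ := by rw [← hcy, norm_smul]
        _ ≤ ((1+‖x‖)/2) * 1 :=
          mul_le_mul hcb' (closureW_norm_le hWac hy) (norm_nonneg _) (by linarith)
        _ = (1+‖x‖)/2 := mul_one _
      linarith
    · intro x hx
      have hx1 : ‖x‖ ≤ 1 := hx
      refine Set.mem_iInter₂.2 fun r hr => ?_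
      have hr1 : (1:ℝ) < r := hr
      by_cases hex : ∃ c : k, 1 < ‖c‖ ∧ ‖c‖ ≤ r
      · obtain ⟨c, hc1, hcr⟩ := hex
        have hc0 : c ≠ 0 := by
          intro h0; rw [h0, norm_zero] at hc1; linarith
        refine Set.mem_smul.2 ⟨c, hcr, c⁻¹ • x, ?_, smul_inv_smul₀ hc0 x⟩
        apply mem_closureW hWsmul hWac
        rw [norm_smul, norm_inv]
        calc ‖c‖⁻¹ * ‖x‖ ≤ ‖c‖⁻¹ * 1 := by
              gcongr
            _ = ‖c‖⁻¹ := mul_one _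
            _ < 1 := by
              rw [inv_lt_one_iff₀]; right; exact hc1
      · push_neg at hex
        refine Set.mem_smul.2 ⟨1, ?_, x, mem_closureW' hWsmul hWac hr1 hex hx1, one_smul _ _⟩
        show ‖(1:k)‖ ≤ r
        rw [norm_one]; linarith
  · -- Part 2
    letI instQ : ∀ r : Set.Ioo (0 : ℝ) 1, TopologicalSpace (QW k W r.1) := fun _ => ⊥
    haveI : ∀ r : Set.Ioo (0 : ℝ) 1, DiscreteTopology (QW k W r.1) := fun r => ⟨rfl⟩
    have PhiS : ∀ f : ↥(QWlim k W),
        Phi f ∈ closure ((fun v : V => (v : Completion V)) '' (W : Set V)) :=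
      fun f => Phi_mem hWac f
    set Phi' : ↥(QWlim k W) → ↥(closure ((fun v : V => (v : Completion V)) '' (W : Set V))) :=
      fun f => ⟨Phi f, PhiS f⟩ with hPhi'
    have hinj : Function.Injective Phi' := by
      intro f g hfg
      have hPfg : Phi f = Phi g := congrArg Subtype.val hfg
      apply Subtype.ext; funext r
      obtain ⟨c, hc0, hcr⟩ := NormedField.exists_norm_lt k r.2.1
      exact Phi_agree hWsmul hWac f g r c (by simpa using hc0.ne') (le_of_lt hcr)
        (by rw [hPfg, sub_self, norm_zero]; exact hc0)
    have hsurj : Function.Surjective Phi' := by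
      intro x
      have hex : ∀ r : Set.Ioo (0:ℝ) 1, ∃ c : k, 0 < ‖c‖ ∧ ‖c‖ < r.1 :=
        fun r => NormedField.exists_norm_lt k r.2.1
      choose c hc0 hcr using hex
      have hw : ∀ r : Set.Ioo (0:ℝ) 1,
          ∃ w : W, dist x.1 ((w : V) : Completion V) < ‖c r‖ := by
        intro r
        rcases Metric.mem_closure_iff.1 x.2 _ (hc0 r) with ⟨b, hb, hdist⟩
        rcases hb with ⟨w, hwW, rfl⟩
        exact ⟨⟨w, hwW⟩, hdist⟩
      choose w hwd using hw
      have hdiff : ∀ r r' : Set.Ioo (0:ℝ) 1,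
          ‖(w r : V) - (w r' : V)‖ < max ‖c r‖ ‖c r'‖ := by
        intro r r'
        rw [← Completion.norm_coe, Completion.coe_sub]
        refine lt_of_le_of_lt (compl_norm_sub_le_max _ x.1 _) (max_lt ?_ ?_)
        · rw [norm_sub_rev, ← dist_eq_norm]
          exact lt_of_lt_of_le (hwd r) (le_max_left _ _)
        · rw [← dist_eq_norm]
          exact lt_of_lt_of_le (hwd r') (le_max_right _ _)
      have hF : (fun r : Set.Ioo (0:ℝ) 1 => (QuotientAddGroup.mk (w r) : QW k W r.1))
          ∈ QWlim k W := by
        intro r r' hrr'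
        rw [QWmap_mk]
        show (QuotientAddGroup.mk (w r') : QW k W r.1) = QuotientAddGroup.mk (w r)
        rw [QW_eq_iff]
        rcases le_total ‖c r'‖ ‖c r‖ with hle | hle
        · refine mem_krW_of_norm_lt hWsmul hWac (x := (w r : V) - (w r' : V))
            (c := c r) (by simpa using (hc0 r).ne') (le_of_lt (hcr r)) ?_
          have := hdiff r r'
          rwa [max_eq_left hle] at this
        · refine mem_krW_of_norm_lt hWsmul hWac (x := (w r : V) - (w r' : V))
            (c := c r') (by simpa using (hc0 r').ne')
            (le_of_lt (lt_of_lt_of_le (hcr r') hrr')) ?_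
          have := hdiff r r'
          rwa [max_eq_right hle] at this
      refine ⟨⟨_, hF⟩, ?_⟩
      apply Subtype.ext
      show Phi ⟨_, hF⟩ = x.1
      have key : ∀ r : Set.Ioo (0:ℝ) 1, ‖Phi ⟨_, hF⟩ - x.1‖ ≤ r.1 := by
        intro r
        have h1 : ‖Phi ⟨_, hF⟩ - ((w r : V) : Completion V)‖ ≤ r.1 :=
          Phi_close hWac ⟨_, hF⟩ r (w r) rfl
        have h2 : ‖((w r : V) : Completion V) - x.1‖ < r.1 := by
          rw [norm_sub_rev, ← dist_eq_norm]
          exact lt_trans (hwd r) (hcr r)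
        refine le_trans (compl_norm_sub_le_max _ ((w r : V) : Completion V) _) ?_
        exact max_le h1 (le_of_lt h2)
      have := norm_eq_zero_of_forall key
      rwa [sub_eq_zero] at this
    have hbij : Function.Bijective Phi' := ⟨hinj, hsurj⟩
    have cont1 : Continuous Phi' := by
      apply Continuous.subtype_mk
      rw [continuous_iff_continuousAt]
      intro f
      rw [ContinuousAt, Metric.tendsto_nhds]
      intro ε hε
      have hrmem : min (ε/2) (1/2) ∈ Set.Ioo (0:ℝ) 1 :=
        ⟨lt_min (by linarith) (by norm_num), lt_of_le_of_lt (min_le_right _ _) (by norm_num)⟩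
      set r : Set.Ioo (0:ℝ) 1 := ⟨min (ε/2) (1/2), hrmem⟩ with hrdef
      have hopen : IsOpen {g : ↥(QWlim k W) | g.1 r = f.1 r} := by
        have hcont : Continuous (fun g : ↥(QWlim k W) => g.1 r) :=
          (continuous_apply r).comp continuous_subtype_val
        exact hcont.isOpen_preimage {f.1 r} (isOpen_discrete _)
      filter_upwards [hopen.mem_nhds rfl] with g hg
      rw [dist_eq_norm]
      have hrep : QuotientAddGroup.mk (QWrep (f.1 r)) = g.1 r := by
        rw [QWrep_spec]; exact hg.symm
      calc ‖Phi g - Phi f‖ ≤ max ‖Phi g - ((QWrep (f.1 r) : V) : Completion V)‖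
            ‖((QWrep (f.1 r) : V) : Completion V) - Phi f‖ :=
          compl_norm_sub_le_max _ _ _
        _ ≤ r.1 := by
            refine max_le (Phi_close hWac g r _ hrep) ?_
            rw [norm_sub_rev]
            exact Phi_close hWac f r _ (QWrep_spec _)
        _ ≤ ε/2 := min_le_left _ _
        _ < ε := by linarith
    have cont2 : Continuous (Equiv.ofBijective Phi' hbij).symm := by
      rw [continuous_induced_rng]
      rw [continuous_pi_iff]
      intro r
      rw [continuous_iff_continuousAt]
      intro x
      rw [ContinuousAt]
      simp only [Function.comp_apply]
      have hp : (nhds (((Equiv.ofBijective Phi' hbij).symm x).1 r)) =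
          pure (((Equiv.ofBijective Phi' hbij).symm x).1 r) := congrFun (nhds_discrete _) _
      rw [hp, Filter.tendsto_pure]
      obtain ⟨c, hc0, hcr⟩ := NormedField.exists_norm_lt k r.2.1
      filter_upwards [Metric.ball_mem_nhds x hc0] with y hy
      apply Phi_agree hWsmul hWac ((Equiv.ofBijective Phi' hbij).symm y)
        ((Equiv.ofBijective Phi' hbij).symm x) r c (by simpa using hc0.ne') (le_of_lt hcr)
      have hfy : Phi ((Equiv.ofBijective Phi' hbij).symm y) = y.1 :=
        congrArg Subtype.val ((Equiv.ofBijective Phi' hbij).apply_symm_apply y)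
      have hgx : Phi ((Equiv.ofBijective Phi' hbij).symm x) = x.1 :=
        congrArg Subtype.val ((Equiv.ofBijective Phi' hbij).apply_symm_apply x)
      rw [hfy, hgx, ← dist_eq_norm, ← Subtype.dist_eq]
      exact hy
    refine ⟨{ toEquiv := Equiv.ofBijective Phi' hbij, continuous_toFun := cont1,
              continuous_invFun := cont2 }, ?_, ?_⟩
    · intro f g h hsum
      show Phi h = Phi f + Phi g
      exact Phi_add hWsmul hWac f g h hsum
    · intro w f hwf
      show Phi f = ((w : V) : Completion V)
      exact Phi_const hWac f w hwf
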